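/- Let x_1 ≤ x_2 ≤ … ≤ x_n be real numbers and k ≥ 1. The optimal 1D k-Means cost equals the optimal cost over interval partitions: min over all sets M = {μ_1, …, μ_k} ⊂ ℝ of at most k centroids of ∑_{ℓ=1}^{n} min_{μ ∈ M} (x_ℓ − μ)² equals the minimum over all partitions of {1, …, n} into at most k consecutive intervals of the sum of the squared-distance cluster costs CC of the intervals. -/

import Mathlib

open Finset

lemma mean_min (x : ℕ → ℝ) (s : Finset ℕ) (c : ℝ) :
    (∑ ℓ ∈ s, (x ℓ - (∑ t ∈ s, x t) / (s.card : ℝ)) ^ 2) ≤ ∑ ℓ ∈ s, (x ℓ - c) ^ 2 := by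
  rcases eq_or_ne s.card 0 with h0 | h0
  · rw [Finset.card_eq_zero] at h0; simp [h0]
  set N : ℝ := (s.card : ℝ) with hN
  have hNne : N ≠ 0 := Nat.cast_ne_zero.mpr h0
  set μ : ℝ := (∑ t ∈ s, x t) / N with hμ
  have hS : ∑ t ∈ s, x t = N * μ := by rw [hμ, mul_div_assoc', mul_div_cancel_left₀ _ hNne]
  have key : ∑ ℓ ∈ s, (x ℓ - c) ^ 2
      = (∑ ℓ ∈ s, (x ℓ - μ) ^ 2) + 2 * (μ - c) * ((∑ t ∈ s, x t) - N * μ) + N * (μ - c) ^ 2 := by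
    have e1 : ∀ ℓ ∈ s, (x ℓ - c) ^ 2
        = (x ℓ - μ) ^ 2 + (2 * (μ - c)) * (x ℓ - μ) + (μ - c) ^ 2 := fun ℓ _ => by ring
    rw [Finset.sum_congr rfl e1, Finset.sum_add_distrib, Finset.sum_add_distrib,
      ← Finset.mul_sum, Finset.sum_sub_distrib, Finset.sum_const, Finset.sum_const,
      nsmul_eq_mul, nsmul_eq_mul, ← hN]
  rw [key, hS]
  have : 0 ≤ N * (μ - c)^2 := mul_nonneg (Nat.cast_nonneg _) (sq_nonneg _)
  linarith

lemma sum_Ioc_telescope (b : ℕ → ℕ) (hb : Monotone b) (f : ℕ → ℝ) (k : ℕ) :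
    ∑ t ∈ Finset.range k, ∑ ℓ ∈ Finset.Ioc (b t) (b (t + 1)), f ℓ
      = ∑ ℓ ∈ Finset.Ioc (b 0) (b k), f ℓ := by
  induction k with
  | zero => simp
  | succ k ih =>
    rw [Finset.sum_range_succ, ih,
      Finset.sum_Ioc_consecutive _ (hb (Nat.zero_le k)) (hb (Nat.le_succ k))]

lemma prefix_eq : ∀ (n : ℕ) (S : Finset ℕ), S ⊆ Finset.Icc 1 n →
    (∀ p q, p ∈ Finset.Icc 1 n → q ∈ S → p ≤ q → p ∈ S) → S = Finset.Icc 1 S.card := by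
  intro n
  induction n with
  | zero =>
    intro S hsub _
    have : S = ∅ := Finset.eq_empty_of_forall_notMem fun a ha =>
      absurd (hsub ha) (by simp)
    simp [this]
  | succ n ih =>
    intro S hsub hdc
    by_cases hn : n + 1 ∈ S
    · have : S = Finset.Icc 1 (n + 1) := by
        apply Finset.Subset.antisymm hsub
        intro p hp
        exact hdc p (n+1) hp hn (by simp at hp; omega)
      rw [this]; simp [Nat.card_Icc]
    · apply ih S
      · intro a ha
        have h1 := hsub ha
        simp only [Finset.mem_Icc] at h1 ⊢
        refine ⟨h1.1, ?_⟩
        rcases Nat.lt_or_ge a (n+1) with h | h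
        · omega
        · exfalso; apply hn
          have : a = n + 1 := by omega
          rwa [← this]
      · intro p q hp hq hpq
        have hq' := hsub hq
        simp only [Finset.mem_Icc] at hp hq'
        exact hdc p q (by simp; omega) hq hpq


/-- The squared-distance cluster cost of grouping `x_i, …, x_j` into one cluster
with the optimal centroid (the arithmetic mean); `0` when `i > j`. -/
noncomputable def clusterCost (x : ℕ → ℝ) (i j : ℕ) : ℝ :=
  ∑ ℓ ∈ Finset.Icc i j,
    (x ℓ - (∑ t ∈ Finset.Icc i j, x t) / ((Finset.Icc i j).card : ℝ)) ^ 2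

/-- `kCost x k m` is the minimum cost of partitioning `x_1, …, x_m` into at most
`k` consecutive groups, each charged its squared-distance cluster cost. -/
noncomputable def kCost (x : ℕ → ℝ) (k m : ℕ) : ℝ :=
  sInf { c : ℝ | ∃ b : ℕ → ℕ, Monotone b ∧ b 0 = 0 ∧ b k = m ∧
    c = ∑ t ∈ Finset.range k, clusterCost x (b t + 1) (b (t + 1)) }

/-- For sorted reals `x_1 ≤ … ≤ x_n` and `k ≥ 1`, the optimal
1D `k`-Means cost — the infimum over all nonempty sets `M` of at most `k` real
centroids of `∑_{ℓ=1}^{n} min_{μ ∈ M} (x_ℓ − μ)²` — equals the minimum over all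
partitions of `{1, …, n}` into at most `k` consecutive intervals of the sum of
the squared-distance cluster costs of the intervals. -/
theorem kmeans_eq_interval_partition (n k : ℕ) (x : ℕ → ℝ)
    (hsort : ∀ ⦃p q : ℕ⦄, 1 ≤ p → p ≤ q → q ≤ n → x p ≤ x q)
    (hk : 1 ≤ k) :
    sInf { c : ℝ | ∃ M : Finset ℝ, M.Nonempty ∧ M.card ≤ k ∧
        c = ∑ ℓ ∈ Finset.Icc 1 n, sInf ((fun μ => (x ℓ - μ) ^ 2) '' (M : Set ℝ)) }
      = kCost x k n := by
  classical
  rw [kCost]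
  set A := { c : ℝ | ∃ M : Finset ℝ, M.Nonempty ∧ M.card ≤ k ∧
        c = ∑ ℓ ∈ Finset.Icc 1 n, sInf ((fun μ => (x ℓ - μ) ^ 2) '' (M : Set ℝ)) } with hA
  set B := { c : ℝ | ∃ b : ℕ → ℕ, Monotone b ∧ b 0 = 0 ∧ b k = n ∧
    c = ∑ t ∈ Finset.range k, clusterCost x (b t + 1) (b (t + 1)) } with hB
  -- basic facts
  have hAne : A.Nonempty := by
    refine ⟨_, ⟨{0}, Finset.singleton_nonempty 0, by simpa using hk, rfl⟩⟩
  have hBne : B.Nonempty := by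
    refine ⟨_, ⟨fun t => if t = 0 then 0 else n, ?_, by simp, by show (if k = 0 then 0 else n) = n; rw [if_neg (by omega)], rfl⟩⟩
    intro a b hab
    by_cases ha : a = 0
    · simp [ha]
    · have hb : b ≠ 0 := by omega
      simp [ha, hb]
  have hA0 : ∀ c ∈ A, (0:ℝ) ≤ c := by
    rintro c ⟨M, hMne, _, rfl⟩
    refine Finset.sum_nonneg fun ℓ _ => ?_
    refine le_csInf (hMne.to_set.image _) ?_
    rintro y ⟨μ', _, rfl⟩
    exact sq_nonneg _
  have hB0 : ∀ c ∈ B, (0:ℝ) ≤ c := by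
    rintro c ⟨b, _, _, _, rfl⟩
    exact Finset.sum_nonneg fun t _ => Finset.sum_nonneg fun ℓ _ => sq_nonneg _
  have hAbdd : BddBelow A := ⟨0, hA0⟩
  have hBbdd : BddBelow B := ⟨0, hB0⟩
  apply le_antisymm
  · -- sInf A ≤ sInf B
    refine le_csInf hBne ?_
    rintro c ⟨b, hbm, hb0, hbk, rfl⟩
    set M : Finset ℝ := (Finset.range k).image
      (fun t => (∑ s ∈ Finset.Icc (b t + 1) (b (t+1)), x s)
        / ((Finset.Icc (b t + 1) (b (t+1))).card : ℝ)) with hM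
    have hMne : M.Nonempty :=
      (Finset.nonempty_range_iff.mpr (by omega)).image _
    have hMcard : M.card ≤ k := (Finset.card_image_le).trans (by simp)
    refine csInf_le_of_le hAbdd ⟨M, hMne, hMcard, rfl⟩ ?_
    have hIccIoc : Finset.Icc 1 n = Finset.Ioc (b 0) (b k) := by
      rw [hb0, hbk]; ext ℓ; simp; omega
    rw [hIccIoc, ← sum_Ioc_telescope b hbm _ k]
    refine Finset.sum_le_sum fun t ht => ?_
    have hIcc : Finset.Icc (b t + 1) (b (t+1)) = Finset.Ioc (b t) (b (t+1)) := by
      ext ℓ; simp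
    rw [← hIcc, clusterCost]
    refine Finset.sum_le_sum fun ℓ _ => ?_
    refine csInf_le ⟨0, ?_⟩ ?_
    · rintro y ⟨μ', _, rfl⟩; exact sq_nonneg _
    · exact ⟨_, Finset.mem_coe.mpr (Finset.mem_image_of_mem _ ht), rfl⟩
  · -- sInf B ≤ sInf A
    refine le_csInf hAne ?_
    rintro c ⟨M, hMne, hMk, rfl⟩
    set L : List ℝ := M.sort (· ≤ ·) with hL
    set m : ℕ := M.card with hm
    have hLlen : L.length = m := Finset.length_sort _
    have hm1 : 1 ≤ m := Finset.card_pos.mpr hMne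
    set μ : ℕ → ℝ := fun t => L.getD t 0 with hμ
    have hμmem : ∀ t, t < m → μ t ∈ M := by
      intro t ht
      have ht' : t < L.length := by omega
      rw [hμ]
      simp only [List.getD_eq_getElem L 0 ht']
      exact (Finset.mem_sort _).mp (List.getElem_mem ht')
    have hμmono : ∀ s t, s < t → t < m → μ s < μ t := by
      intro s t hst htm
      have ht' : t < L.length := by omega
      have hs' : s < L.length := by omega
      have hsorted := List.sortedLT_iff_pairwise.mp (Finset.sortedLT_sort M)
      have h2 := hsorted.rel_get_of_lt (show (⟨s, hs'⟩ : Fin L.length) < ⟨t, ht'⟩ from hst)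
      have es : μ s = L[s] := List.getD_eq_getElem L 0 hs'
      have et : μ t = L[t] := List.getD_eq_getElem L 0 ht'
      rw [es, et]
      simpa [List.get_eq_getElem] using h2
    have hsurj : ∀ μ' ∈ M, ∃ t, t < m ∧ μ t = μ' := by
      intro μ' hμ'
      have : μ' ∈ L := (Finset.mem_sort _).mpr hμ'
      obtain ⟨t, ht, hget⟩ := List.mem_iff_getElem.mp this
      exact ⟨t, by omega, by simp [hμ, List.getD, List.getElem?_eq_getElem ht, hget]⟩
    -- the assignment
    set D : ℕ → ℕ → ℝ := fun ℓ t => (x ℓ - μ t)^2 with hD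
    have hFne : ∀ ℓ, ((Finset.range m).filter
        (fun t => ∀ s ∈ Finset.range m, D ℓ t ≤ D ℓ s)).Nonempty := by
      intro ℓ
      obtain ⟨t, ht, hmin⟩ := Finset.exists_min_image (Finset.range m) (D ℓ)
        ⟨0, Finset.mem_range.mpr hm1⟩
      exact ⟨t, Finset.mem_filter.mpr ⟨ht, hmin⟩⟩
    set a : ℕ → ℕ := fun ℓ => (((Finset.range m).filter
        (fun t => ∀ s ∈ Finset.range m, D ℓ t ≤ D ℓ s))).max' (hFne ℓ) with ha
    have hamem : ∀ ℓ, a ℓ ∈ (Finset.range m).filter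
        (fun t => ∀ s ∈ Finset.range m, D ℓ t ≤ D ℓ s) := fun ℓ => Finset.max'_mem _ _
    have ha_lt : ∀ ℓ, a ℓ < m := fun ℓ =>
      Finset.mem_range.mp (Finset.mem_filter.mp (hamem ℓ)).1
    have ha_min : ∀ ℓ, ∀ s < m, D ℓ (a ℓ) ≤ D ℓ s := fun ℓ s hs =>
      (Finset.mem_filter.mp (hamem ℓ)).2 s (Finset.mem_range.mpr hs)
    have ha_max : ∀ ℓ t, t < m → (∀ s ∈ Finset.range m, D ℓ t ≤ D ℓ s) → t ≤ a ℓ :=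
      fun ℓ t htm hmin => Finset.le_max' _ _ (Finset.mem_filter.mpr ⟨Finset.mem_range.mpr htm, hmin⟩)
    -- monotonicity of the assignment
    have hamono : ∀ p q, 1 ≤ p → p ≤ q → q ≤ n → a p ≤ a q := by
      intro p q hp hpq hq
      by_contra hcon
      push_neg at hcon
      set t := a p with htdef
      set t' := a q with ht'def
      have ht'm : t' < m := ha_lt q
      have htm : t < m := ha_lt p
      have ht't : t' < t := hcon
      have hd1 : D p t ≤ D p t' := ha_min p t' ht'm
      have hd2 : D q t' < D q t := by
        by_contra h
        push_neg at h
        have : t ≤ a q := ha_max q t htm (fun s hs =>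
          le_trans h ((Finset.mem_filter.mp (hamem q)).2 s hs))
        omega
      have hmono := hμmono t' t ht't htm
      have hx : x p ≤ x q := hsort hp hpq hq
      simp only [hD] at hd1 hd2
      nlinarith [mul_le_mul_of_nonneg_left hx (by linarith : (0:ℝ) ≤ 2*(μ t - μ t'))]
    -- boundaries
    set b : ℕ → ℕ := fun t => ((Finset.Icc 1 n).filter (fun ℓ => a ℓ < t)).card with hb
    have hbm : Monotone b := by
      intro s t hst
      apply Finset.card_le_card
      intro ℓ hℓ
      rw [Finset.mem_filter] at hℓ ⊢
      exact ⟨hℓ.1, lt_of_lt_of_le hℓ.2 hst⟩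
    have hb0 : b 0 = 0 := by simp [hb]
    have hbk : b k = n := by
      show ((Finset.Icc 1 n).filter (fun ℓ => a ℓ < k)).card = n
      rw [Finset.filter_true_of_mem (fun ℓ _ => lt_of_lt_of_le (ha_lt ℓ) hMk)]
      simp [Nat.card_Icc]
    have hprefix : ∀ t, (Finset.Icc 1 n).filter (fun ℓ => a ℓ < t) = Finset.Icc 1 (b t) := by
      intro t
      exact prefix_eq n _ (Finset.filter_subset _ _) (by
        intro p q hp hq hpq
        rw [Finset.mem_filter] at hq ⊢
        have hp' := Finset.mem_Icc.mp hp
        have hq' := Finset.mem_Icc.mp hq.1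
        exact ⟨hp, lt_of_le_of_lt (hamono p q hp'.1 hpq hq'.2) hq.2⟩)
    have hgroup : ∀ t, Finset.Ioc (b t) (b (t+1))
        = (Finset.Icc 1 n).filter (fun ℓ => a ℓ = t) := by
      intro t
      have e : Finset.Ioc (b t) (b (t+1)) = Finset.Icc 1 (b (t+1)) \ Finset.Icc 1 (b t) := by
        ext ℓ; simp; omega
      rw [e, ← hprefix, ← hprefix]
      ext ℓ
      simp only [Finset.mem_sdiff, Finset.mem_filter, Finset.mem_Icc]
      constructor
      · rintro ⟨⟨h1, h2⟩, h3⟩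
        refine ⟨h1, ?_⟩
        by_contra h
        rcases Nat.lt_or_ge (a ℓ) t with hh | hh
        · exact h3 ⟨h1, hh⟩
        · omega
      · rintro ⟨h1, h2⟩
        exact ⟨⟨h1, by omega⟩, fun ⟨_, hh⟩ => by omega⟩
    -- the value of each sInf
    have hval : ∀ ℓ, sInf ((fun μ' => (x ℓ - μ') ^ 2) '' (M : Set ℝ)) = D ℓ (a ℓ) := by
      intro ℓ
      refine IsLeast.csInf_eq ⟨⟨μ (a ℓ), hμmem (a ℓ) (ha_lt ℓ), rfl⟩, ?_⟩
      rintro y ⟨μ', hμ', rfl⟩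
      obtain ⟨s, hs, rfl⟩ := hsurj μ' hμ'
      exact ha_min ℓ s hs
    -- put it together
    refine csInf_le_of_le hBbdd ⟨b, hbm, hb0, hbk, rfl⟩ ?_
    calc ∑ t ∈ Finset.range k, clusterCost x (b t + 1) (b (t+1))
        ≤ ∑ t ∈ Finset.range k, ∑ ℓ ∈ Finset.Icc (b t + 1) (b (t+1)), D ℓ t := by
          refine Finset.sum_le_sum fun t _ => ?_
          exact mean_min x _ (μ t)
      _ = ∑ t ∈ Finset.range k, ∑ ℓ ∈ (Finset.Icc 1 n).filter (fun ℓ => a ℓ = t), D ℓ (a ℓ) := by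
          refine Finset.sum_congr rfl fun t _ => ?_
          have : Finset.Icc (b t + 1) (b (t+1)) = Finset.Ioc (b t) (b (t+1)) := by
            ext ℓ; simp
          rw [this, hgroup]
          exact Finset.sum_congr rfl fun ℓ hℓ => by
            rw [(Finset.mem_filter.mp hℓ).2]
      _ = ∑ ℓ ∈ Finset.Icc 1 n, D ℓ (a ℓ) := by
          exact Finset.sum_fiberwise_of_maps_to
            (fun ℓ _ => Finset.mem_range.mpr (lt_of_lt_of_le (ha_lt ℓ) hMk)) _
      _ = ∑ ℓ ∈ Finset.Icc 1 n, sInf ((fun μ' => (x ℓ - μ') ^ 2) '' (M : Set ℝ)) := by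
          exact Finset.sum_congr rfl fun ℓ _ => (hval ℓ).symm
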